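/- Let λ > 0, c > 0. For any d_x > 0, the spatial autocorrelation of the canonical OU∧ process equals exp(-λ d_x / c). Equivalently, with t* = t - d_x/(2c), ∫_{-∞}^{t*} (2c(t-s) - d_x) exp(-2λ(t-s)) ds divided by ∫_{-∞}^{t} 2c(t-s) exp(-2λ(t-s)) ds equals exp(-λ d_x / c). -/

import Mathlib

open MeasureTheory Real Set Filter

/-- Substitution `u = t - s` turning an integral over `Iic a` into one over `Ioi (t - a)`. -/
lemma integral_comp_sub_left_Iic (t a : ℝ) (f : ℝ → ℝ) :
    (∫ x in Iic a, f (t - x)) = ∫ u in Ioi (t - a), f u := by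
  have A : MeasurableEmbedding (fun x : ℝ => t - x) :=
    (MeasurableEquiv.subLeft t).measurableEmbedding
  have h := A.setIntegral_map (μ := volume) f (Ici (t - a))
  rw [Measure.map_sub_left_eq_self (volume : Measure ℝ) t] at h
  have hpre : (fun x : ℝ => t - x) ⁻¹' Ici (t - a) = Iic a := by
    ext x; simp [sub_le_sub_iff_left]
  rw [hpre] at h
  rw [← integral_Ici_eq_integral_Ioi, h]

/-- Key improper integral:
`∫_{a}^{∞} (α u + β) e^{-2λu} du = e^{-2λa} ((αa+β)/(2λ) + α/(4λ²))`
provided `α u + β ≥ 0` on `[a, ∞)`. -/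
lemma key_integral (lam α β a : ℝ) (hlam : 0 < lam)
    (hnn : ∀ u ∈ Ici a, 0 ≤ α * u + β) :
    ∫ u in Ioi a, (α * u + β) * Real.exp (-(2 * lam * u))
      = Real.exp (-(2 * lam * a)) * ((α * a + β) / (2 * lam) + α / (4 * lam ^ 2)) := by
  have hl : (2 : ℝ) * lam ≠ 0 := by positivity
  set F : ℝ → ℝ := fun u =>
    -(Real.exp (-(2 * lam * u)) * ((α * u + β) / (2 * lam) + α / (4 * lam ^ 2))) with hF
  have hderiv : ∀ u ∈ Ici a, HasDerivAt F ((α * u + β) * Real.exp (-(2 * lam * u))) u := by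
    intro u _
    have h1 : HasDerivAt (fun u : ℝ => -(2 * lam * u)) (-(2 * lam)) u := by
      simpa [Pi.neg_def] using (hasDerivAt_id u).const_mul (2 * lam) |>.neg
    have h2 : HasDerivAt (fun u : ℝ => Real.exp (-(2 * lam * u)))
        (Real.exp (-(2 * lam * u)) * (-(2 * lam))) u := h1.exp
    have h3 : HasDerivAt (fun u : ℝ => (α * u + β) / (2 * lam) + α / (4 * lam ^ 2))
        (α / (2 * lam)) u := by
      simpa [mul_div_assoc] using
        (((hasDerivAt_id u).const_mul α).add_const β).div_const (2 * lam) |>.add_const (α / (4 * lam ^ 2))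
    have := (h2.mul h3).neg
    refine HasDerivAt.congr_deriv this ?_
    field_simp
    ring
  have hpos : ∀ u ∈ Ioi a, 0 ≤ (α * u + β) * Real.exp (-(2 * lam * u)) := fun u hu =>
    mul_nonneg (hnn u (mem_Ici.mpr (le_of_lt (mem_Ioi.mp hu)))) (Real.exp_nonneg _)
  have htend : Tendsto F atTop (nhds 0) := by
    have ht1 : Tendsto (fun u : ℝ => 2 * lam * u) atTop atTop :=
      Tendsto.const_mul_atTop (by positivity) tendsto_id
    have hx : Tendsto (fun x : ℝ => Real.exp (-x) * (α / (4 * lam ^ 2) * x + (β / (2 * lam) + α / (4 * lam ^ 2)))) atTop (nhds 0) := by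
      have hA : Tendsto (fun x : ℝ => x * Real.exp (-x)) atTop (nhds 0) := by
        simpa using tendsto_pow_mul_exp_neg_atTop_nhds_zero 1
      have hB : Tendsto (fun x : ℝ => Real.exp (-x)) atTop (nhds 0) :=
        Real.tendsto_exp_neg_atTop_nhds_zero
      have := (hA.const_mul (α / (4 * lam ^ 2))).add
        (hB.const_mul (β / (2 * lam) + α / (4 * lam ^ 2)))
      simpa using this.congr (fun x => by ring)
    have := (hx.comp ht1).neg
    simp only [neg_zero] at this
    refine this.congr (fun u => ?_)
    simp only [Function.comp, hF]
    rw [div_add_div _ _ hl (by positivity : (4:ℝ) * lam ^ 2 ≠ 0)]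
    field_simp
    ring
  have := integral_Ioi_of_hasDerivAt_of_nonneg' hderiv hpos htend
  rw [this, hF]
  ring


/-- Spatial autocorrelation of the canonical OU∧ process: with t* = t - d_x/(2c),
the ratio of the exponentially weighted intersection area to the weighted ambit area
equals exp(-λ d_x / c). -/
theorem canonical_OUwedge_spatial_autocorrelation
    (lam c t d_x : ℝ) (hlam : 0 < lam) (hc : 0 < c) (hd : 0 < d_x) :
    (∫ s in Set.Iic (t - d_x / (2 * c)),
        (2 * c * (t - s) - d_x) * Real.exp (-(2 * lam * (t - s)))) /
      (∫ s in Set.Iic t, 2 * c * (t - s) * Real.exp (-(2 * lam * (t - s))))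
    = Real.exp (-(lam * d_x / c)) := by
  have hc' : (2 : ℝ) * c ≠ 0 := by positivity
  -- numerator
  have hnum : (∫ s in Set.Iic (t - d_x / (2  * c)),
        (2 * c * (t - s) - d_x) * Real.exp (-(2 * lam * (t - s))))
      = Real.exp (-(lam * d_x / c)) * (c / (2 * lam ^ 2)) := by
    have h1 : (∫ s in Set.Iic (t - d_x / (2 * c)),
          (2 * c * (t - s) - d_x) * Real.exp (-(2 * lam * (t - s))))
        = ∫ u in Ioi (d_x / (2 * c)), (2 * c * u + (-d_x)) * Real.exp (-(2 * lam * u)) := by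
      have := integral_comp_sub_left_Iic t (t - d_x / (2 * c))
        (fun u => (2 * c * u + (-d_x)) * Real.exp (-(2 * lam * u)))
      simp only [sub_sub_cancel] at this
      rw [← this]
      congr 1
    rw [h1, key_integral lam (2 * c) (-d_x) (d_x / (2 * c)) hlam]
    · have e1 : 2 * c * (d_x / (2 * c)) + -d_x = 0 := by field_simp; ring
      have e2 : -(2 * lam * (d_x / (2 * c))) = -(lam * d_x / c) := by field_simp
      rw [e1, e2, zero_div, zero_add]
      congr 1
      field_simp
      ring
    · intro u hu
      have : d_x / (2 * c) ≤ u := hu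
      have h2 := (div_le_iff₀ (by positivity : (0:ℝ) < 2 * c)).mp this
      linarith
  -- denominator
  have hden : (∫ s in Set.Iic t, 2 * c * (t - s) * Real.exp (-(2 * lam * (t - s))))
      = c / (2 * lam ^ 2) := by
    have h1 : (∫ s in Set.Iic t, 2 * c * (t - s) * Real.exp (-(2 * lam * (t - s))))
        = ∫ u in Ioi (0 : ℝ), (2 * c * u + 0) * Real.exp (-(2 * lam * u)) := by
      have := integral_comp_sub_left_Iic t t
        (fun u => (2 * c * u + 0) * Real.exp (-(2 * lam * u)))
      simp only [sub_self] at this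
      rw [← this]
      congr 1; ext s; ring_nf
    rw [h1, key_integral lam (2 * c) 0 0 hlam]
    · simp
      field_simp
      ring
    · intro u hu
      have : (0:ℝ) ≤ u := hu
      positivity
  rw [hnum, hden]
  rw [mul_div_assoc]
  rw [div_self (by positivity : c / (2 * lam ^ 2) ≠ 0), mul_one]
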